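/- arXiv:0903.4743 — 2 statements merged into one kernel-verified Lean document; each statement's English description precedes it below -/
import Mathlib

section
/- For any matrix M in SL(2,C) with M ≠ ±I, the image of the linear endomorphism of sl(2,C) given by m ↦ m - M m M⁻¹ is exactly the set {w ∈ sl(2,C) : tr(w M) = 0}. -/
open Matrix

/-- For `M ∈ SL(2,ℂ)` with `M ≠ ±I`, the image of the endomorphism
`m ↦ m - M m M⁻¹` of `sl(2,ℂ)` (traceless matrices) is `{w ∈ sl(2,ℂ) : tr (w M) = 0}`. -/
theorem image_ad_endomorphism_eq_trace_zero
    (M : Matrix.SpecialLinearGroup (Fin 2) ℂ) (hM1 : M ≠ 1) (hM2 : M ≠ -1) :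
    {w : Matrix (Fin 2) (Fin 2) ℂ | ∃ m : Matrix (Fin 2) (Fin 2) ℂ,
        Matrix.trace m = 0 ∧ w = m - (M : Matrix (Fin 2) (Fin 2) ℂ) * m * (M : Matrix (Fin 2) (Fin 2) ℂ)⁻¹}
      = {w : Matrix (Fin 2) (Fin 2) ℂ | Matrix.trace w = 0 ∧
          Matrix.trace (w * (M : Matrix (Fin 2) (Fin 2) ℂ)) = 0} := by
  set A : Matrix (Fin 2) (Fin 2) ℂ := (M : Matrix (Fin 2) (Fin 2) ℂ) with hA
  have hdetA : A.det = 1 := M.2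
  have hdet : A 0 0 * A 1 1 - A 0 1 * A 1 0 = 1 := by
    rw [← Matrix.det_fin_two]; exact hdetA
  set a := A 0 0 with ha
  set b := A 0 1 with hb
  set c := A 1 0 with hc
  set d := A 1 1 with hd
  have hAeta : A = !![a, b; c, d] := Matrix.eta_fin_two A
  have hInv : A⁻¹ = !![d, -b; -c, a] := by
    apply Matrix.inv_eq_right_inv
    rw [hAeta]
    ext i j
    fin_cases i <;> fin_cases j <;>
      simp [Matrix.mul_apply, Fin.sum_univ_two, Matrix.one_apply] <;>
      first
        | ring1
        | linear_combination hdet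
        | linear_combination -hdet
        | linear_combination 2*hdet
        | linear_combination -2*hdet
  have hUnit : IsUnit A.det := by rw [hdetA]; exact isUnit_one
  -- M is not ±1, hence not scalar
  have hns : ¬ (b = 0 ∧ c = 0 ∧ a = d) := by
    rintro ⟨hb0, hc0, had⟩
    have ha2 : a * a = 1 := by
      have := hdet; rw [hb0, ← had] at this; linear_combination this
    rcases mul_self_eq_one_iff.mp ha2 with h1 | h1
    · apply hM1
      refine Subtype.coe_injective (Eq.trans (?_ : A = 1) (by simp))
      rw [hAeta, hb0, hc0, ← had, h1]
      ext i j
      fin_cases i <;> fin_cases j <;> simp [Matrix.one_apply]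
    · apply hM2
      refine Subtype.coe_injective (Eq.trans (?_ : A = -1) (by simp))
      rw [hAeta, hb0, hc0, ← had, h1]
      ext i j
      fin_cases i <;> fin_cases j <;> simp [Matrix.one_apply]
  ext w
  simp only [Set.mem_setOf_eq]
  constructor
  · rintro ⟨m, hm, rfl⟩
    constructor
    · rw [Matrix.trace_sub, Matrix.trace_mul_cycle A m A⁻¹,
        Matrix.nonsing_inv_mul A hUnit, one_mul, sub_self]
    · rw [sub_mul, Matrix.trace_sub, mul_assoc (A * m) A⁻¹ A,
        Matrix.nonsing_inv_mul A hUnit, mul_one, Matrix.trace_mul_comm A m, sub_self]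
  · rintro ⟨htr, htrM⟩
    set p := w 0 0 with hp
    set q := w 0 1 with hq
    set r := w 1 0 with hr
    have hw11 : w 1 1 = -p := by
      rw [Matrix.trace_fin_two] at htr
      linear_combination htr
    have hcon : p * a + q * c + r * b - p * d = 0 := by
      rw [Matrix.trace_fin_two] at htrM
      simp only [Matrix.mul_apply, Fin.sum_univ_two] at htrM
      rw [hw11] at htrM
      linear_combination htrM
    by_cases hc0 : c ≠ 0
    · obtain ⟨x, hx⟩ : ∃ x : ℂ, 2 * c * x = c * p - a * r :=
        ⟨(c * p - a * r) / (2 * c), by field_simp⟩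
      obtain ⟨y, hy⟩ : ∃ y : ℂ, c * y = d * p - b * r :=
        ⟨(d * p - b * r) / c, by field_simp⟩
      refine ⟨!![x, y; 0, -x], by simp [Matrix.trace_fin_two], ?_⟩
      rw [hInv, hAeta]
      ext i j
      have h2c : (2 * c : ℂ) ≠ 0 := by
        simp [hc0]
      fin_cases i <;> fin_cases j <;>
        simp [Matrix.mul_apply, Fin.sum_univ_two, ← hp, ← hq, ← hr, hw11]
      · apply mul_left_cancel₀ h2c
        linear_combination (-(1 - a*d - b*c)) * hx - 2*a*c * hy - (c*p + a*r) * hdet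
      · apply mul_left_cancel₀ hc0
        linear_combination hcon + (a*p) * hdet - a*b * hx - (1 - a*a) * hy
      · apply mul_left_cancel₀ hc0
        linear_combination -(c*r) * hdet + c*d * hx - c*c * hy
      · apply mul_left_cancel₀ h2c
        linear_combination (1 - a*d - b*c) * hx + 2*a*c * hy + (c*p + a*r) * hdet
    · push_neg at hc0
      by_cases hb0 : b ≠ 0
      · obtain ⟨x, hx⟩ : ∃ x : ℂ, 2 * b * x = b * p + d * q :=
          ⟨(b * p + d * q) / (2 * b), by field_simp⟩
        obtain ⟨z, hz⟩ : ∃ z : ℂ, b * z = -(a * p + c * q) :=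
          ⟨-((a * p + c * q) / b), by field_simp⟩
        refine ⟨!![x, 0; z, -x], by simp [Matrix.trace_fin_two], ?_⟩
        rw [hInv, hAeta]
        ext i j
        have h2b : (2 * b : ℂ) ≠ 0 := by
          simp [hb0]
        fin_cases i <;> fin_cases j <;>
          simp [Matrix.mul_apply, Fin.sum_univ_two, ← hp, ← hq, ← hr, hw11]
        · apply mul_left_cancel₀ h2b
          linear_combination (-(1 - a*d - b*c)) * hx + 2*d*b * hz - (b*p - d*q) * hdet
        · apply mul_left_cancel₀ hb0
          linear_combination -(b*q) * hdet - a*b * hx - b*b * hz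
        · apply mul_left_cancel₀ hb0
          linear_combination hcon - (d*p) * hdet + c*d * hx - (1 - d*d) * hz
        · apply mul_left_cancel₀ h2b
          linear_combination (1 - a*d - b*c) * hx - 2*d*b * hz + (b*p - d*q) * hdet
      · push_neg at hb0
        have had : a ≠ d := fun h => hns ⟨hb0, hc0, h⟩
        have had1 : a * d = 1 := by
          have := hdet; rw [hb0, hc0] at this; linear_combination this
        have ha0 : a ≠ 0 := by
          intro h0; rw [h0, zero_mul] at had1; exact zero_ne_one had1
        have hd0 : d ≠ 0 := by
          intro h0; rw [h0, mul_zero] at had1; exact zero_ne_one had1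
        have ha2 : (1 : ℂ) - a * a ≠ 0 := by
          intro h
          apply had
          have : a * (a - d) = 0 := by linear_combination -h - had1
          exact sub_eq_zero.mp ((mul_eq_zero.mp this).resolve_left ha0)
        have hd2 : (1 : ℂ) - d * d ≠ 0 := by
          intro h
          apply had
          have : d * (a - d) = 0 := by linear_combination had1 + h
          exact sub_eq_zero.mp ((mul_eq_zero.mp this).resolve_left hd0)
        have hp0 : p = 0 := by
          rw [hb0, hc0] at hcon
          have h' : p * (a - d) = 0 := by linear_combination hcon
          rcases mul_eq_zero.mp h' with h | h
          · exact h
          · exact absurd (sub_eq_zero.mp h) had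
        obtain ⟨y, hy⟩ : ∃ y : ℂ, (1 - a * a) * y = q := ⟨q / (1 - a * a), by rw [mul_comm]; exact div_mul_cancel₀ q ha2⟩
        obtain ⟨z, hz⟩ : ∃ z : ℂ, (1 - d * d) * z = r := ⟨r / (1 - d * d), by rw [mul_comm]; exact div_mul_cancel₀ r hd2⟩
        refine ⟨!![0, y; z, 0], by simp [Matrix.trace_fin_two], ?_⟩
        rw [hInv, hAeta]
        ext i j
        fin_cases i <;> fin_cases j <;>
          simp [Matrix.mul_apply, Fin.sum_univ_two, ← hp, ← hq, ← hr, hw11, hb0, hc0, hp0]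
        all_goals first
          | linear_combination hy
          | linear_combination hz
          | linear_combination hy + hz
          | linear_combination -hy - hz
          | linear_combination -hy
          | linear_combination -hz
          | linear_combination 2*hy
          | linear_combination 2*hz
          | linear_combination hy - hz
          | linear_combination hz - hy
end

section
/- Let G = SL(2,C), and let σ : F_n → G be a representation of a free group, and γ₁, γ₂ ∈ F_n with σ(γ₂) ≠ ±I. Define f : R(F_n, G) × G → G by f(σ', B) = B σ'(γ₁) B⁻¹ σ'(γ₂)⁻¹. If the derivatives of the trace functions σ' ↦ tr σ'(γ₁) and σ' ↦ tr σ'(γ₂) are linearly independent at σ, then f is a submersion at every point (σ, B) with f(σ, B) = I. -/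
open Matrix

set_option maxHeartbeats 2000000

lemma one_fin_two' : (1 : Matrix (Fin 2) (Fin 2) ℂ) = !![1,0;0,1] := by
  ext i j; fin_cases i <;> fin_cases j <;> simp [Matrix.one_apply]

lemma neg_one_fin_two' : (-1 : Matrix (Fin 2) (Fin 2) ℂ) = !![-1,0;0,-1] := by
  ext i j; fin_cases i <;> fin_cases j <;> simp [Matrix.one_apply]

lemma fin_two_sub (p q r s a b c d : ℂ) :
    !![p,q;r,s] - !![a,b;c,d] = !![p-a, q-b; r-c, s-d] := by
  ext i j; fin_cases i <;> fin_cases j <;> simp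

lemma fin_two_ext {a b c d e f g h : ℂ} :
    !![a,b;c,d] = !![e,f;g,h] ↔ a = e ∧ b = f ∧ c = g ∧ d = h := by
  constructor
  · intro heq
    refine ⟨?_, ?_, ?_, ?_⟩ <;>
      [exact congrFun (congrFun heq 0) 0; exact congrFun (congrFun heq 0) 1;
       exact congrFun (congrFun heq 1) 0; exact congrFun (congrFun heq 1) 1]
  · rintro ⟨h1, h2, h3, h4⟩; rw [h1, h2, h3, h4]

lemma sl2_solve (A w : Matrix (Fin 2) (Fin 2) ℂ) (hdet : A.det = 1)
    (hA1 : A ≠ 1) (hA2 : A ≠ -1)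
    (hw : Matrix.trace w = 0) (hwA : Matrix.trace (w * A) = 0) :
    ∃ X : Matrix (Fin 2) (Fin 2) ℂ, Matrix.trace X = 0 ∧ X - A * X * A.adjugate = w := by
  have hdet' : A 0 0 * A 1 1 - A 0 1 * A 1 0 = 1 := by
    rw [Matrix.det_fin_two] at hdet; exact hdet
  set a := A 0 0 with ha
  set b := A 0 1 with hb
  set c := A 1 0 with hc
  set d := A 1 1 with hd
  set x := w 0 0 with hx
  set y := w 0 1 with hy
  set z := w 1 0 with hz
  have hw' : w 1 1 = -x := by
    rw [Matrix.trace_fin_two] at hw; linear_combination hw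
  have hAmat : A = !![a, b; c, d] := by
    ext i j; fin_cases i <;> fin_cases j <;> simp [ha, hb, hc, hd]
  have hwmat : w = !![x, y; z, -x] := by
    ext i j; fin_cases i <;> fin_cases j <;> simp [hx, hy, hz, hw']
  have hwA' : a * x + c * y + b * z - d * x = 0 := by
    rw [hwmat, hAmat] at hwA
    rw [Matrix.mul_fin_two, Matrix.trace_fin_two_of] at hwA
    linear_combination hwA
  have hadj : A.adjugate = !![d, -b; -c, a] := by
    rw [hAmat, Matrix.adjugate_fin_two]; norm_num
  rcases eq_or_ne b 0 with hb0 | hb0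
  · rcases eq_or_ne c 0 with hc0 | hc0
    · -- diagonal case
      have hdet2 : a * d = 1 := by rw [hb0, hc0] at hdet'; linear_combination hdet'
      have hne : a ≠ d := by
        intro h
        rw [← h] at hdet2
        rcases mul_self_eq_one_iff.mp hdet2 with h1 | h1
        · refine hA1 ?_
          rw [hAmat, hb0, hc0, h1, ← h, h1]
          exact (one_fin_two').symm
        · refine hA2 ?_
          rw [hAmat, hb0, hc0, h1, ← h, h1]
          exact (neg_one_fin_two').symm
      have ha0 : a ≠ 0 := by
        intro h0; rw [h0, zero_mul] at hdet2; exact zero_ne_one hdet2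
      have hd0 : d ≠ 0 := by
        intro h0; rw [h0, mul_zero] at hdet2; exact zero_ne_one hdet2
      have h1a : 1 - a * a ≠ 0 := by
        intro h
        have ha2 : a * a = 1 := by linear_combination -h
        exact hne (mul_left_cancel₀ ha0 (by rw [hdet2, ha2])).symm
      have h1d : 1 - d * d ≠ 0 := by
        intro h
        have hd2 : d * d = 1 := by linear_combination -h
        exact hne (mul_right_cancel₀ hd0 (by rw [hdet2, hd2]))
      have hx0 : x = 0 := by
        have h3 : (a - d) * x = 0 := by linear_combination hwA' - y * hc0 - z * hb0
        exact (mul_eq_zero.mp h3).resolve_left (sub_ne_zero.mpr hne)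
      refine ⟨!![0, y/(1 - a*a); z/(1 - d*d), 0], by rw [Matrix.trace_fin_two_of]; ring, ?_⟩
      rw [hadj, hAmat, hwmat, hb0, hc0, hx0, Matrix.mul_fin_two, Matrix.mul_fin_two,
        fin_two_sub, fin_two_ext]
      refine ⟨?_, ?_, ?_, ?_⟩ <;>
        field_simp [show (1:ℂ) - a^2 ≠ 0 by rwa [sq], show (1:ℂ) - d^2 ≠ 0 by rwa [sq]] <;> ring
    · refine ⟨!![(c*x - a*z)/(2*c), (d*x - b*z)/c; 0, -((c*x - a*z)/(2*c))], by
        rw [Matrix.trace_fin_two_of]; ring, ?_⟩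
      have hb' : b = (a*d - 1)/c := by field_simp; linear_combination -hdet'
      have hy' : y = ((d - a)*x - ((a*d - 1)/c)*z)/c := by
        rw [← hb']; field_simp; linear_combination hwA'
      rw [hadj, hAmat, hwmat, hb', hy', Matrix.mul_fin_two, Matrix.mul_fin_two, fin_two_sub,
        fin_two_ext]
      refine ⟨?_, ?_, ?_, ?_⟩ <;> field_simp <;> ring_nf <;> field_simp <;> ring
  · refine ⟨!![(b*x + d*y)/(2*b), 0; -((a*x + c*y)/b), -((b*x + d*y)/(2*b))], by
      rw [Matrix.trace_fin_two_of]; ring, ?_⟩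
    have hc' : c = (a*d - 1)/b := by field_simp; linear_combination -hdet'
    have hz' : z = ((d - a)*x - ((a*d - 1)/b)*y)/b := by
      rw [← hc']; field_simp; linear_combination hwA'
    rw [hadj, hAmat, hwmat, hc', hz', Matrix.mul_fin_two, Matrix.mul_fin_two, fin_two_sub,
      fin_two_ext]
    refine ⟨?_, ?_, ?_, ?_⟩ <;> field_simp <;> ring_nf <;> field_simp <;> ring


/-- Let `G = SL(2,ℂ)`, `σ : F_n → G`, `γ₁, γ₂ ∈ F_n` with `σ(γ₂) ≠ ±I`, and
`f(σ', B) = B σ'(γ₁) B⁻¹ σ'(γ₂)⁻¹`. If the derivatives of `σ' ↦ tr σ'(γ₁)` and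
`σ' ↦ tr σ'(γ₂)` are linearly independent at `σ` (tangent vectors at `σ` being the
`sl(2,ℂ)`-valued group cocycles `zd`, with `d(tr_γ)(zd) = tr (zd(γ) σ(γ))`), then `f` is a
submersion at each point `(σ, B)` with `f(σ, B) = I`: its differential
`(zd, Bd) ↦ Bd + Ad(B) zd(γ₁) − Ad(σ(γ₂)) Bd − zd(γ₂)` is onto `sl(2,ℂ)`. -/
theorem hnn_gluing_map_submersion
    (n : ℕ) (σ : FreeGroup (Fin n) →* Matrix.SpecialLinearGroup (Fin 2) ℂ)
    (γ₁ γ₂ : FreeGroup (Fin n))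
    (hσ1 : σ γ₂ ≠ 1) (hσ2 : σ γ₂ ≠ -1)
    (hindep : ∀ a b : ℂ,
      (∀ zd : FreeGroup (Fin n) → Matrix (Fin 2) (Fin 2) ℂ,
        (∀ γ, Matrix.trace (zd γ) = 0) →
        (∀ δ₁ δ₂, zd (δ₁ * δ₂) = zd δ₁ +
          (σ δ₁ : Matrix (Fin 2) (Fin 2) ℂ) * zd δ₂ * ((σ δ₁)⁻¹ : Matrix.SpecialLinearGroup (Fin 2) ℂ)) →
        a * Matrix.trace (zd γ₁ * (σ γ₁ : Matrix (Fin 2) (Fin 2) ℂ)) +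
          b * Matrix.trace (zd γ₂ * (σ γ₂ : Matrix (Fin 2) (Fin 2) ℂ)) = 0) →
      a = 0 ∧ b = 0)
    (B : Matrix.SpecialLinearGroup (Fin 2) ℂ)
    (hB : B * σ γ₁ * B⁻¹ * (σ γ₂)⁻¹ = 1) :
    ∀ v : Matrix (Fin 2) (Fin 2) ℂ, Matrix.trace v = 0 →
      ∃ (zd : FreeGroup (Fin n) → Matrix (Fin 2) (Fin 2) ℂ) (Bd : Matrix (Fin 2) (Fin 2) ℂ),
        (∀ γ, Matrix.trace (zd γ) = 0) ∧
        (∀ δ₁ δ₂, zd (δ₁ * δ₂) = zd δ₁ +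
          (σ δ₁ : Matrix (Fin 2) (Fin 2) ℂ) * zd δ₂ * ((σ δ₁)⁻¹ : Matrix.SpecialLinearGroup (Fin 2) ℂ)) ∧
        Matrix.trace Bd = 0 ∧
        Bd + (B : Matrix (Fin 2) (Fin 2) ℂ) * zd γ₁ * (B⁻¹ : Matrix.SpecialLinearGroup (Fin 2) ℂ)
          - (σ γ₂ : Matrix (Fin 2) (Fin 2) ℂ) * Bd * ((σ γ₂)⁻¹ : Matrix.SpecialLinearGroup (Fin 2) ℂ)
          - zd γ₂ = v := by
  intro v hv
  -- find a cocycle with nonzero value of the relevant functional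
  obtain ⟨zd₁, hz1, hz2, hs⟩ :
      ∃ zd₁ : FreeGroup (Fin n) → Matrix (Fin 2) (Fin 2) ℂ,
        (∀ γ, Matrix.trace (zd₁ γ) = 0) ∧
        (∀ δ₁ δ₂, zd₁ (δ₁ * δ₂) = zd₁ δ₁ +
          (σ δ₁ : Matrix (Fin 2) (Fin 2) ℂ) * zd₁ δ₂ * ((σ δ₁)⁻¹ : Matrix.SpecialLinearGroup (Fin 2) ℂ)) ∧
        Matrix.trace (zd₁ γ₂ * (σ γ₂ : Matrix (Fin 2) (Fin 2) ℂ)) -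
          Matrix.trace (zd₁ γ₁ * (σ γ₁ : Matrix (Fin 2) (Fin 2) ℂ)) ≠ 0 := by
    by_contra hcon
    push_neg at hcon
    have h := hindep (-1) 1 (fun zd h1 h2 => by
      have h3 := hcon zd h1 h2
      linear_combination h3)
    exact one_ne_zero h.2
  set T1 := Matrix.trace (zd₁ γ₁ * (σ γ₁ : Matrix (Fin 2) (Fin 2) ℂ)) with hT1
  set T2 := Matrix.trace (zd₁ γ₂ * (σ γ₂ : Matrix (Fin 2) (Fin 2) ℂ)) with hT2
  set c₀ := -(Matrix.trace (v * (σ γ₂ : Matrix (Fin 2) (Fin 2) ℂ))) / (T2 - T1) with hc₀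
  -- coercion facts
  have hBB : ((B⁻¹ : Matrix.SpecialLinearGroup (Fin 2) ℂ) : Matrix (Fin 2) (Fin 2) ℂ) *
      (B : Matrix (Fin 2) (Fin 2) ℂ) = 1 := by
    rw [← Matrix.SpecialLinearGroup.coe_mul, inv_mul_cancel B,
      Matrix.SpecialLinearGroup.coe_one]
  have hσγ₁ : (σ γ₁ : Matrix (Fin 2) (Fin 2) ℂ) =
      ((B⁻¹ : Matrix.SpecialLinearGroup (Fin 2) ℂ) : Matrix (Fin 2) (Fin 2) ℂ) *
      (σ γ₂ : Matrix (Fin 2) (Fin 2) ℂ) * (B : Matrix (Fin 2) (Fin 2) ℂ) := by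
    have h1 : B * σ γ₁ * B⁻¹ = σ γ₂ := mul_inv_eq_one.mp hB
    have h2 : σ γ₁ = B⁻¹ * σ γ₂ * B := by rw [← h1]; group
    rw [h2, Matrix.SpecialLinearGroup.coe_mul, Matrix.SpecialLinearGroup.coe_mul]
  -- the matrix w
  set w := v - (B : Matrix (Fin 2) (Fin 2) ℂ) * (c₀ • zd₁ γ₁) *
      ((B⁻¹ : Matrix.SpecialLinearGroup (Fin 2) ℂ) : Matrix (Fin 2) (Fin 2) ℂ) +
      c₀ • zd₁ γ₂ with hwdef
  have hconj_tr : ∀ M : Matrix (Fin 2) (Fin 2) ℂ,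
      Matrix.trace ((B : Matrix (Fin 2) (Fin 2) ℂ) * M *
        ((B⁻¹ : Matrix.SpecialLinearGroup (Fin 2) ℂ) : Matrix (Fin 2) (Fin 2) ℂ)) =
      Matrix.trace M := by
    intro M
    rw [Matrix.trace_mul_comm, ← Matrix.mul_assoc, hBB, Matrix.one_mul]
  have hwtr : Matrix.trace w = 0 := by
    rw [hwdef, Matrix.trace_add, Matrix.trace_sub, hconj_tr, Matrix.trace_smul,
      Matrix.trace_smul, hz1, hz1, hv]
    simp
  have hwAtr : Matrix.trace (w * (σ γ₂ : Matrix (Fin 2) (Fin 2) ℂ)) = 0 := by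
    have hconjA : Matrix.trace ((B : Matrix (Fin 2) (Fin 2) ℂ) * (c₀ • zd₁ γ₁) *
        ((B⁻¹ : Matrix.SpecialLinearGroup (Fin 2) ℂ) : Matrix (Fin 2) (Fin 2) ℂ) *
        (σ γ₂ : Matrix (Fin 2) (Fin 2) ℂ)) = c₀ * T1 := by
      rw [Matrix.mul_assoc, Matrix.mul_assoc, Matrix.trace_mul_comm, Matrix.mul_assoc,
        ← hσγ₁, smul_mul_assoc, Matrix.trace_smul, smul_eq_mul, ← hT1]
    have h2 : Matrix.trace ((c₀ • zd₁ γ₂) * (σ γ₂ : Matrix (Fin 2) (Fin 2) ℂ)) = c₀ * T2 := by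
      rw [smul_mul_assoc, Matrix.trace_smul, smul_eq_mul, ← hT2]
    rw [hwdef, Matrix.add_mul, Matrix.sub_mul, Matrix.trace_add, Matrix.trace_sub,
      hconjA, h2, hc₀]
    field_simp
    ring
  -- solve for Bd
  have hdet : ((σ γ₂ : Matrix (Fin 2) (Fin 2) ℂ)).det = 1 := (σ γ₂).property
  have hA1 : (σ γ₂ : Matrix (Fin 2) (Fin 2) ℂ) ≠ 1 := by
    intro h
    exact hσ1 (Subtype.ext h)
  have hA2 : (σ γ₂ : Matrix (Fin 2) (Fin 2) ℂ) ≠ -1 := by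
    intro h
    exact hσ2 (Subtype.ext h)
  obtain ⟨Bd, hBdtr, hBdeq⟩ := sl2_solve (σ γ₂ : Matrix (Fin 2) (Fin 2) ℂ) w hdet hA1 hA2 hwtr hwAtr
  refine ⟨fun γ => c₀ • zd₁ γ, Bd, ?_, ?_, hBdtr, ?_⟩
  · intro γ; rw [Matrix.trace_smul, hz1, smul_zero]
  · intro δ₁ δ₂
    simp only [hz2 δ₁ δ₂, smul_add, mul_smul_comm, smul_mul_assoc]
  · have hinv : ((((σ γ₂)⁻¹ : Matrix.SpecialLinearGroup (Fin 2) ℂ)) : Matrix (Fin 2) (Fin 2) ℂ) =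
        ((σ γ₂ : Matrix (Fin 2) (Fin 2) ℂ)).adjugate :=
      Matrix.SpecialLinearGroup.coe_inv (σ γ₂)
    rw [hinv]
    have h5 : Bd - (σ γ₂ : Matrix (Fin 2) (Fin 2) ℂ) * Bd *
        ((σ γ₂ : Matrix (Fin 2) (Fin 2) ℂ)).adjugate =
        v - (B : Matrix (Fin 2) (Fin 2) ℂ) * (c₀ • zd₁ γ₁) *
          ((B⁻¹ : Matrix.SpecialLinearGroup (Fin 2) ℂ) : Matrix (Fin 2) (Fin 2) ℂ) +
          c₀ • zd₁ γ₂ := hBdeq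
    beta_reduce
    calc Bd + (B : Matrix (Fin 2) (Fin 2) ℂ) * (c₀ • zd₁ γ₁) *
          ((B⁻¹ : Matrix.SpecialLinearGroup (Fin 2) ℂ) : Matrix (Fin 2) (Fin 2) ℂ)
          - (σ γ₂ : Matrix (Fin 2) (Fin 2) ℂ) * Bd *
            ((σ γ₂ : Matrix (Fin 2) (Fin 2) ℂ)).adjugate - c₀ • zd₁ γ₂
        = (Bd - (σ γ₂ : Matrix (Fin 2) (Fin 2) ℂ) * Bd *
            ((σ γ₂ : Matrix (Fin 2) (Fin 2) ℂ)).adjugate) +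
          (B : Matrix (Fin 2) (Fin 2) ℂ) * (c₀ • zd₁ γ₁) *
          ((B⁻¹ : Matrix.SpecialLinearGroup (Fin 2) ℂ) : Matrix (Fin 2) (Fin 2) ℂ)
          - c₀ • zd₁ γ₂ := by abel
      _ = (v - (B : Matrix (Fin 2) (Fin 2) ℂ) * (c₀ • zd₁ γ₁) *
          ((B⁻¹ : Matrix.SpecialLinearGroup (Fin 2) ℂ) : Matrix (Fin 2) (Fin 2) ℂ) +
          c₀ • zd₁ γ₂) +
          (B : Matrix (Fin 2) (Fin 2) ℂ) * (c₀ • zd₁ γ₁) *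
          ((B⁻¹ : Matrix.SpecialLinearGroup (Fin 2) ℂ) : Matrix (Fin 2) (Fin 2) ℂ)
          - c₀ • zd₁ γ₂ := by rw [h5]
      _ = v := by abel
end
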